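/- arXiv:2409.10292 — 2 statements merged into one kernel-verified Lean document; each statement's English description precedes it below -/
import Mathlib

section
/- Let 𝒜 = {A_1,…,A_K} be n×n matrices over 𝔽 (ℝ or ℂ), h_k(Q) = Q^{-1}A_kQ, and f_𝒜(Q) = (1/2) Σ_k ‖J ∘ h_k(Q)‖². Then for every invertible Q and every matrix Z, the first (real Fréchet) differential of f_𝒜 at Q in direction Z is df_𝒜|_Q(Z) = Σ_{k=1}^K ⟨[h_k(Q), Q^{-1}Z], J ∘ h_k(Q)⟩_ℝ. -/
open Matrix

attribute [local instance] Matrix.frobeniusNormedAddCommGroup Matrix.frobeniusNormedSpace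

variable {𝕜 : Type*} [RCLike 𝕜] {n K : ℕ}

/-- The real Frobenius inner product `⟨X,Y⟩_ℝ = Re ∑ᵢⱼ Xᵢⱼ conj(Yᵢⱼ)`. -/
noncomputable def rinner (X Y : Matrix (Fin n) (Fin n) 𝕜) : ℝ :=
  RCLike.re (∑ i, ∑ j, X i j * (starRingEnd 𝕜) (Y i j))

/-- The off-diagonal part `J ∘ X`. -/
def offd (X : Matrix (Fin n) (Fin n) 𝕜) : Matrix (Fin n) (Fin n) 𝕜 :=
  fun i j => if i = j then 0 else X i j

/-- The cost functional `f_𝒜(Q) = (1/2) ∑ₖ ‖J ∘ (Q⁻¹AₖQ)‖²`. -/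
noncomputable def costF (A : Fin K → Matrix (Fin n) (Fin n) 𝕜)
    (Q : Matrix (Fin n) (Fin n) 𝕜) : ℝ :=
  (1 / 2) * ∑ k, ∑ i, ∑ j, if i ≠ j then ‖(Q⁻¹ * A k * Q) i j‖ ^ 2 else 0

attribute [local instance] Matrix.frobeniusNormedRing Matrix.frobeniusNormedAlgebra

noncomputable local instance : CompleteSpace (Matrix (Fin n) (Fin n) 𝕜) :=
  FiniteDimensional.complete ℝ _

/-- Entry evaluation as a continuous linear map. -/
noncomputable def entryCLM (i j : Fin n) : Matrix (Fin n) (Fin n) 𝕜 →L[ℝ] 𝕜 :=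
  LinearMap.toContinuousLinearMap
    { toFun := fun M => M i j, map_add' := fun _ _ => rfl, map_smul' := fun _ _ => rfl }

@[simp] lemma entryCLM_apply (i j : Fin n) (M : Matrix (Fin n) (Fin n) 𝕜) :
    entryCLM i j M = M i j := rfl

lemma hasFDerivAt_norm_sq_comp {E : Type*} [NormedAddCommGroup E] [NormedSpace ℝ E]
    {g : E → 𝕜} {g' : E →L[ℝ] 𝕜} {x : E} (hg : HasFDerivAt g g' x) :
    HasFDerivAt (fun y => ‖g y‖ ^ 2)
      ((2 * RCLike.re (g x)) • (RCLike.reCLM.comp g') +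
       (2 * RCLike.im (g x)) • (RCLike.imCLM.comp g')) x := by
  have hre : HasFDerivAt (fun y => RCLike.re (g y)) (RCLike.reCLM.comp g') x :=
    ((RCLike.reCLM (K := 𝕜)).hasFDerivAt).comp x hg
  have him : HasFDerivAt (fun y => RCLike.im (g y)) (RCLike.imCLM.comp g') x :=
    ((RCLike.imCLM (K := 𝕜)).hasFDerivAt).comp x hg
  have h2 := (hre.fun_mul hre).fun_add (him.fun_mul him)
  have hf : (fun y => ‖g y‖ ^ 2) =
      fun y => RCLike.re (g y) * RCLike.re (g y) + RCLike.im (g y) * RCLike.im (g y) := by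
    funext y
    rw [← RCLike.normSq_apply, RCLike.normSq_eq_def']
  rw [hf]
  refine h2.congr_fderiv ?_
  ext z
  simp only [ContinuousLinearMap.add_apply, ContinuousLinearMap.smul_apply,
    ContinuousLinearMap.comp_apply, smul_eq_mul, RCLike.reCLM_apply, RCLike.imCLM_apply]
  ring

/-- the first real Fréchet differential of `f_𝒜` at an invertible `Q`
in direction `Z` equals `∑ₖ ⟨[h_k(Q), Q⁻¹Z], J ∘ h_k(Q)⟩_ℝ`. -/
theorem fderiv_costF (A : Fin K → Matrix (Fin n) (Fin n) 𝕜)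
    (Q : Matrix (Fin n) (Fin n) 𝕜) (hQ : IsUnit Q) (Z : Matrix (Fin n) (Fin n) 𝕜) :
    fderiv ℝ (costF A) Q Z =
      ∑ k, rinner
        ((Q⁻¹ * A k * Q) * (Q⁻¹ * Z) - (Q⁻¹ * Z) * (Q⁻¹ * A k * Q))
        (offd (Q⁻¹ * A k * Q)) := by
  classical
  have hdet : IsUnit Q.det := (Matrix.isUnit_iff_isUnit_det Q).mp hQ
  set Linv : Matrix (Fin n) (Fin n) 𝕜 →L[ℝ] Matrix (Fin n) (Fin n) 𝕜 :=
    -(ContinuousLinearMap.mulLeftRight ℝ _ Q⁻¹ Q⁻¹) with hLinv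
  have h0 : HasFDerivAt (Ring.inverse : Matrix (Fin n) (Fin n) 𝕜 → _) Linv Q := by
    have := hasFDerivAt_ringInverse (𝕜 := ℝ) hQ.unit
    have hco : (↑hQ.unit⁻¹ : Matrix (Fin n) (Fin n) 𝕜) = Q⁻¹ := by
      rw [← Ring.inverse_unit, hQ.unit_spec, ← Matrix.nonsing_inv_eq_ringInverse]
    rw [hQ.unit_spec, hco] at this
    exact this
  set D : Fin K → (Matrix (Fin n) (Fin n) 𝕜 →L[ℝ] Matrix (Fin n) (Fin n) 𝕜) := fun k =>
    (Ring.inverse Q * A k) • (ContinuousLinearMap.id ℝ _) +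
      (Linv.smulRight (A k)).smulRight Q with hDdef
  have hD : ∀ k, HasFDerivAt (fun P => Ring.inverse P * A k * P) (D k) Q := fun k =>
    (h0.mul_const' (A k)).mul' (hasFDerivAt_id Q)
  set T : Fin K → Fin n → Fin n → (Matrix (Fin n) (Fin n) 𝕜 →L[ℝ] ℝ) := fun k i j =>
    if i = j then 0 else
      (2 * RCLike.re ((Ring.inverse Q * A k * Q) i j)) •
          (RCLike.reCLM.comp ((entryCLM i j).comp (D k))) +
        (2 * RCLike.im ((Ring.inverse Q * A k * Q) i j)) •
          (RCLike.imCLM.comp ((entryCLM i j).comp (D k))) with hTdef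
  have hT : ∀ k i j, HasFDerivAt
      (fun P => if i ≠ j then ‖(Ring.inverse P * A k * P) i j‖ ^ 2 else 0) (T k i j) Q := by
    intro k i j
    by_cases hij : i = j
    · simp only [hTdef, hij, if_pos, ne_eq, not_true_eq_false, if_false, ite_true]
      exact hasFDerivAt_const 0 Q
    · simp only [hTdef, hij, if_neg, ne_eq, not_false_eq_true, if_true, ite_false]
      exact hasFDerivAt_norm_sq_comp (((entryCLM (𝕜 := 𝕜) i j).hasFDerivAt).comp Q (hD k))
  have hcost : HasFDerivAt (costF A) ((1/2 : ℝ) • ∑ k, ∑ i, ∑ j, T k i j) Q := by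
    have hfun : costF A = fun P => (1/2 : ℝ) * ∑ k, ∑ i, ∑ j,
        (if i ≠ j then ‖(Ring.inverse P * A k * P) i j‖ ^ 2 else 0) := by
      funext P
      simp [costF, Matrix.nonsing_inv_eq_ringInverse]
    rw [hfun]
    exact (HasFDerivAt.fun_sum fun k _ => HasFDerivAt.fun_sum fun i _ =>
      HasFDerivAt.fun_sum fun j _ => hT k i j).const_mul (1/2 : ℝ)
  rw [hcost.fderiv]
  -- now evaluate
  have hDZ : ∀ k, D k Z =
      (Q⁻¹ * A k * Q) * (Q⁻¹ * Z) - (Q⁻¹ * Z) * (Q⁻¹ * A k * Q) := by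
    intro k
    have hcl : Q * (Q⁻¹ * Z) = Z := by
      rw [← Matrix.mul_assoc, Matrix.mul_nonsing_inv Q hdet, Matrix.one_mul]
    simp only [hDdef, hLinv, ContinuousLinearMap.add_apply, ContinuousLinearMap.smul_apply,
      ContinuousLinearMap.smulRight_apply, ContinuousLinearMap.id_apply,
      ContinuousLinearMap.neg_apply, ContinuousLinearMap.mulLeftRight_apply,
      smul_eq_mul, ← Matrix.nonsing_inv_eq_ringInverse]
    rw [sub_eq_add_neg]
    congr 1
    · rw [Matrix.mul_assoc (Q⁻¹ * A k) Q (Q⁻¹ * Z), hcl, Matrix.mul_assoc]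
    · change -(Q⁻¹ * Z * Q⁻¹) * A k * Q = _
      simp only [neg_mul, Matrix.neg_mul]
      congr 1
      simp only [Matrix.mul_assoc]
  simp only [ContinuousLinearMap.smul_apply, ContinuousLinearMap.sum_apply, smul_eq_mul,
    Finset.mul_sum]
  refine Finset.sum_congr rfl fun k _ => ?_
  rw [rinner, ← hDZ k]
  rw [map_sum]
  refine Finset.sum_congr rfl fun i _ => ?_
  rw [map_sum]
  refine Finset.sum_congr rfl fun j _ => ?_
  by_cases hij : i = j
  · simp [hTdef, hij, offd]
  · simp only [hTdef, hij, ite_false, offd, ContinuousLinearMap.add_apply,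
      ContinuousLinearMap.smul_apply, ContinuousLinearMap.comp_apply, entryCLM_apply,
      RCLike.reCLM_apply, RCLike.imCLM_apply, smul_eq_mul,
      ← Matrix.nonsing_inv_eq_ringInverse]
    rw [RCLike.mul_re]
    simp only [RCLike.conj_re, RCLike.conj_im]
    ring
end

section
/- Let 𝒜 = {A_1,…,A_K} be n×n matrices over 𝔽 (ℝ or ℂ), h_k(Q) = Q^{-1}A_kQ, and f_𝒜(Q) = (1/2) Σ_k ‖J ∘ h_k(Q)‖². Then for every invertible Q and every matrix Z, the second (real Fréchet) differential of f_𝒜 at Q evaluated on the diagonal is d²f_𝒜|_Q(Z,Z) = Σ_{k=1}^K ( ‖J ∘ [h_k(Q), Q^{-1}Z]‖² + 2⟨[Q^{-1}Z, Q^{-1}Z·h_k(Q)], J ∘ h_k(Q)⟩_ℝ ). -/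
open Matrix

attribute [local instance] Matrix.frobeniusNormedAddCommGroup Matrix.frobeniusNormedSpace

variable {𝕜 : Type*} [RCLike 𝕜] {n K : ℕ}

section Aux

attribute [local instance] Matrix.frobeniusNormedRing Matrix.frobeniusNormedAlgebra

local notation "M" => Matrix (Fin n) (Fin n) 𝕜

@[reducible] noncomputable def topM : TopologicalSpace (Matrix (Fin n) (Fin n) 𝕜) :=
  (Matrix.frobeniusNormedAddCommGroup : NormedAddCommGroup (Matrix (Fin n) (Fin n) 𝕜)).toUniformSpace.toTopologicalSpace

attribute [local instance] topM

instance : FiniteDimensional ℝ (Matrix (Fin n) (Fin n) 𝕜) :=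
  Module.Finite.trans 𝕜 (Matrix (Fin n) (Fin n) 𝕜)

/-! ### Algebraic lemmas about `rinner` and `offd` -/

lemma rinner_add_left (X Y W : M) : rinner (X + Y) W = rinner X W + rinner Y W := by
  simp [rinner, Matrix.add_apply, add_mul, Finset.sum_add_distrib]

lemma rinner_add_right (X Y W : M) : rinner X (Y + W) = rinner X Y + rinner X W := by
  simp [rinner, Matrix.add_apply, mul_add, Finset.sum_add_distrib]

lemma rinner_smul_left (r : ℝ) (X W : M) : rinner (r • X) W = r * rinner X W := by
  simp only [rinner, Matrix.smul_apply, smul_mul_assoc, ← Finset.smul_sum, RCLike.smul_re]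

lemma rinner_smul_right (r : ℝ) (X W : M) : rinner X (r • W) = r * rinner X W := by
  unfold rinner
  have h : ∀ i j, X i j * (starRingEnd 𝕜) ((r • W) i j) =
      r • (X i j * (starRingEnd 𝕜) (W i j)) := fun i j => by
    simp only [Matrix.smul_apply, RCLike.real_smul_eq_coe_mul, _root_.map_mul,
      RCLike.conj_ofReal]
    ring
  simp only [h, ← Finset.smul_sum, RCLike.smul_re]

lemma rinner_comm (X Y : M) : rinner X Y = rinner Y X := by
  have h : (∑ i, ∑ j, X i j * (starRingEnd 𝕜) (Y i j)) =
      (starRingEnd 𝕜) (∑ i, ∑ j, Y i j * (starRingEnd 𝕜) (X i j)) := by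
    simp [map_sum, _root_.map_mul, mul_comm]
  rw [rinner, h, RCLike.conj_re, rinner]

lemma rinner_offd_left (X Y : M) : rinner (offd X) (offd Y) = rinner X (offd Y) := by
  unfold rinner
  congr 1
  refine Finset.sum_congr rfl fun i _ => Finset.sum_congr rfl fun j _ => ?_
  by_cases h : i = j <;> simp [offd, h]

lemma offd_add (X Y : M) : offd (X + Y) = offd X + offd Y := by
  ext i j; by_cases h : i = j <;> simp [offd, h]

lemma offd_smul (r : ℝ) (X : M) : offd (r • X) = r • offd X := by
  ext i j; by_cases h : i = j <;> simp [offd, h]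

/-! ### Bundled continuous linear maps -/

/-- Matrix multiplication as a continuous ℝ-bilinear map. -/
noncomputable def mulL : M →L[ℝ] M →L[ℝ] M :=
  LinearMap.toContinuousLinearMap <|
    (LinearMap.toContinuousLinearMap.toLinearMap).comp (LinearMap.mul ℝ M)

local notation "mulL'" => (mulL (𝕜 := 𝕜) (n := n))

@[simp] lemma mulL_apply (X Y : M) : mulL' X Y = X * Y := rfl

/-- `rinner` as a continuous ℝ-bilinear map. -/
noncomputable def rinnerL : M →L[ℝ] M →L[ℝ] ℝ :=
  LinearMap.toContinuousLinearMap <|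
  { toFun := fun X => LinearMap.toContinuousLinearMap
      { toFun := fun Y => rinner X Y
        map_add' := fun a b => rinner_add_right X a b
        map_smul' := fun r a => rinner_smul_right r X a }
    map_add' := fun a b => by
      apply ContinuousLinearMap.ext; intro W
      exact rinner_add_left a b W
    map_smul' := fun r a => by
      apply ContinuousLinearMap.ext; intro W
      exact rinner_smul_left r a W }

local notation "rinnerL'" => (rinnerL (𝕜 := 𝕜) (n := n))

@[simp] lemma rinnerL_apply (X Y : M) : rinnerL' X Y = rinner X Y := rfl

/-- `offd` as a continuous ℝ-linear map. -/
noncomputable def offdL : M →L[ℝ] M :=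
  LinearMap.toContinuousLinearMap
  { toFun := offd
    map_add' := offd_add
    map_smul' := offd_smul }

local notation "offdL'" => (offdL (𝕜 := 𝕜) (n := n))

@[simp] lemma offdL_apply (X : M) : offdL' X = offd X := rfl

/-! ### Derivative building blocks -/

lemma HasFDerivAt.bilin {E : Type*} [NormedAddCommGroup E] [NormedSpace ℝ E]
    {G : Type*} [NormedAddCommGroup G] [NormedSpace ℝ G]
    (B : M →L[ℝ] M →L[ℝ] G) {u v : E → M} {u' v' : E →L[ℝ] M} {x : E}
    (hu : HasFDerivAt u u' x) (hv : HasFDerivAt v v' x) :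
    HasFDerivAt (fun y => B (u y) (v y))
      ((B (u x)).comp v' + (B.flip (v x)).comp u') x := by
  have hc : HasFDerivAt (fun y => B (u y)) (B.comp u') x := by
    have hB := B.hasFDerivAt (x := u x)
    exact HasFDerivAt.comp (𝕜 := ℝ) (g := ⇑B) (g' := B) x hB hu
  have h := hc.clm_apply hv
  convert h using 1
  all_goals (ext W; simp)

/-- Derivative of matrix inversion at an invertible point. -/
noncomputable def invDeriv (Q : M) : M →L[ℝ] M := -((mulL' Q⁻¹).comp ((mulL').flip Q⁻¹))

@[simp] lemma invDeriv_apply (Q W : M) : invDeriv Q W = -(Q⁻¹ * (W * Q⁻¹)) := by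
  simp [invDeriv]

lemma matrixInv_hasFDerivAt {Q : M} (hQ : IsUnit Q) :
    HasFDerivAt (fun P : M => P⁻¹) (invDeriv Q) Q := by
  have h := hasFDerivAt_ringInverse (𝕜 := ℝ) hQ.unit
  have hfun : (Ring.inverse : M → M) = fun P : M => P⁻¹ :=
    funext fun P => (Matrix.nonsing_inv_eq_ringInverse P).symm
  rw [hfun, hQ.unit_spec] at h
  refine h.congr_fderiv ?_
  have hcoe : ((hQ.unit⁻¹ : (Matrix (Fin n) (Fin n) 𝕜)ˣ) : M) = Q⁻¹ := by
    rw [Matrix.coe_units_inv, hQ.unit_spec]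
  ext W
  simp [hcoe, ContinuousLinearMap.mulLeftRight_apply, mul_assoc]

/-- Derivative of `P ↦ P⁻¹ * B * P` at an invertible point `Q`. -/
noncomputable def conjDeriv (B Q : M) : M →L[ℝ] M :=
  (mulL' (Q⁻¹ * B * Q)).comp (mulL' Q⁻¹) - ((mulL').flip (Q⁻¹ * B * Q)).comp (mulL' Q⁻¹)

@[simp] lemma conjDeriv_apply (B Q W : M) :
    conjDeriv B Q W = (Q⁻¹ * B * Q) * (Q⁻¹ * W) - (Q⁻¹ * W) * (Q⁻¹ * B * Q) := by
  simp [conjDeriv]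

lemma hasFDerivAt_conj (B : M) {Q : M} (hQ : IsUnit Q) :
    HasFDerivAt (fun P : M => P⁻¹ * B * P) (conjDeriv B Q) Q := by
  have hdet : IsUnit Q.det := (Matrix.isUnit_iff_isUnit_det Q).mp hQ
  have hQr : Q * Q⁻¹ = 1 := Matrix.mul_nonsing_inv Q hdet
  have h1 : HasFDerivAt (fun P : M => P⁻¹ * B) (((mulL').flip B).comp (invDeriv Q)) Q :=
    ((mulL').flip B).hasFDerivAt.comp Q (matrixInv_hasFDerivAt hQ)
  have h2 := HasFDerivAt.bilin mulL' h1 (hasFDerivAt_id Q)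
  refine h2.congr_fderiv ?_
  ext W
  simp only [conjDeriv_apply, ContinuousLinearMap.add_apply, ContinuousLinearMap.comp_apply,
    ContinuousLinearMap.coe_id', id_eq, ContinuousLinearMap.flip_apply, mulL_apply,
    invDeriv_apply]
  have e1 : Q⁻¹ * B * Q * (Q⁻¹ * W) = Q⁻¹ * B * W := by
    rw [mul_assoc (Q⁻¹ * B) Q (Q⁻¹ * W), ← mul_assoc Q Q⁻¹ W, hQr, one_mul]
  have e2 : Q⁻¹ * W * (Q⁻¹ * B * Q) = Q⁻¹ * (W * Q⁻¹) * B * Q := by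
    noncomm_ring
  rw [e1, e2]
  noncomm_ring

/-! ### `costF` in terms of `rinner`/`offd` -/

lemma costF_eq (A : Fin K → M) (P : M) :
    costF A P = ∑ k, (1 / 2) * rinner (offd (P⁻¹ * A k * P)) (offd (P⁻¹ * A k * P)) := by
  rw [costF, Finset.mul_sum]
  refine Finset.sum_congr rfl fun k _ => ?_
  congr 1
  rw [rinner, map_sum]
  refine Finset.sum_congr rfl fun i _ => ?_
  rw [map_sum]
  refine Finset.sum_congr rfl fun j _ => ?_
  by_cases h : i = j
  · simp [offd, h]
  · simp only [offd, if_neg h, ne_eq, h, not_false_eq_true, if_pos, RCLike.mul_conj]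
    rw [← RCLike.ofReal_pow, RCLike.ofReal_re]
    simp

/-! ### First derivative of `costF` -/

/-- The first derivative of `costF` at `P`. -/
noncomputable def D1 (A : Fin K → M) (P : M) : M →L[ℝ] ℝ :=
  ∑ k, ((rinnerL').flip (offd (P⁻¹ * A k * P))).comp ((offdL').comp (conjDeriv (A k) P))

lemma D1_apply (A : Fin K → M) (P W : M) :
    D1 A P W = ∑ k, rinner
      (offd ((P⁻¹ * A k * P) * (P⁻¹ * W) - (P⁻¹ * W) * (P⁻¹ * A k * P)))
      (offd (P⁻¹ * A k * P)) := by
  simp [D1, ContinuousLinearMap.sum_apply]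

lemma hasFDerivAt_costF (A : Fin K → M) {P : M} (hP : IsUnit P) :
    HasFDerivAt (costF A) (D1 A P) P := by
  have hfun : costF A = fun P : M =>
      ∑ k, (1 / 2 : ℝ) * rinner (offd (P⁻¹ * A k * P)) (offd (P⁻¹ * A k * P)) :=
    funext (costF_eq A)
  have H : HasFDerivAt (fun P : M =>
      ∑ k, (1 / 2 : ℝ) * rinner (offd (P⁻¹ * A k * P)) (offd (P⁻¹ * A k * P)))
      (∑ k, (1 / 2 : ℝ) •
        ((rinnerL' (offd (P⁻¹ * A k * P))).comp ((offdL').comp (conjDeriv (A k) P)) +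
          ((rinnerL').flip (offd (P⁻¹ * A k * P))).comp ((offdL').comp (conjDeriv (A k) P)))) P := by
    refine HasFDerivAt.fun_sum fun k _ => ?_
    have hk := hasFDerivAt_conj (A k) hP
    have h1 : HasFDerivAt (fun P : M => offd (P⁻¹ * A k * P))
        ((offdL').comp (conjDeriv (A k) P)) P := (offdL').hasFDerivAt.comp P hk
    have h2 := HasFDerivAt.bilin rinnerL' h1 h1
    exact h2.const_mul (1 / 2 : ℝ)
  rw [hfun]
  convert H using 1
  ext W
  simp only [D1, ContinuousLinearMap.coe_sum', Finset.sum_apply,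
    ContinuousLinearMap.comp_apply, ContinuousLinearMap.flip_apply, rinnerL_apply, offdL_apply,
    ContinuousLinearMap.smul_apply, ContinuousLinearMap.add_apply, smul_eq_mul]
  refine Finset.sum_congr rfl fun k _ => ?_
  rw [rinner_comm (offd (P⁻¹ * A k * P))]
  ring

lemma differentiableAt_D1 (A : Fin K → M) {Q : M} (hQ : IsUnit Q) :
    DifferentiableAt ℝ (fun P : M => D1 A P) Q := by
  simp only [D1]
  refine DifferentiableAt.fun_sum (𝕜 := ℝ) (E := M) (F := M →L[ℝ] ℝ) fun k _ => ?_
  have hconj : DifferentiableAt ℝ (fun P : M => P⁻¹ * A k * P) Q :=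
    (hasFDerivAt_conj (A k) hQ).differentiableAt
  have hinv : DifferentiableAt ℝ (fun P : M => P⁻¹) Q :=
    (matrixInv_hasFDerivAt hQ).differentiableAt
  have h1 : DifferentiableAt ℝ (fun P : M => (rinnerL').flip (offd (P⁻¹ * A k * P))) Q :=
    (((rinnerL').flip.comp offdL').differentiableAt).comp Q hconj
  have h2 : DifferentiableAt ℝ (fun P : M => conjDeriv (A k) P) Q := by
    simp only [conjDeriv]
    have hm1 : DifferentiableAt ℝ (fun P : M => mulL' (P⁻¹ * A k * P)) Q := by
      have hB := (mulL').differentiableAt (x := Q⁻¹ * A k * Q)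
      exact DifferentiableAt.comp (𝕜 := ℝ) (g := ⇑(mulL')) Q hB hconj
    have hm2 : DifferentiableAt ℝ (fun P : M => (mulL').flip (P⁻¹ * A k * P)) Q :=
      ((mulL').flip.differentiableAt).comp Q hconj
    have hm3 : DifferentiableAt ℝ (fun P : M => mulL' P⁻¹) Q := by
      have hB := (mulL').differentiableAt (x := Q⁻¹)
      exact DifferentiableAt.comp (𝕜 := ℝ) (g := ⇑(mulL')) Q hB hinv
    exact (hm1.clm_comp hm3).sub (hm2.clm_comp hm3)
  have h3 : DifferentiableAt ℝ (fun P : M => (offdL').comp (conjDeriv (A k) P)) Q :=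
    (differentiableAt_const offdL').clm_comp h2
  exact h1.clm_comp h3

lemma eventually_isUnit {Q : M} (hQ : IsUnit Q) : ∀ᶠ P in nhds Q, IsUnit P :=
  Units.isOpen.eventually_mem hQ

/-! ### Second derivative pieces -/

lemma second_piece (B Z : M) {Q : M} (hQ : IsUnit Q) :
    ∃ D : M →L[ℝ] ℝ,
      HasFDerivAt (fun P : M =>
        rinner (offd ((P⁻¹ * B * P) * (P⁻¹ * Z) - (P⁻¹ * Z) * (P⁻¹ * B * P)))
          (offd (P⁻¹ * B * P))) D Q ∧
      D Z = rinner
          (offd ((Q⁻¹ * B * Q) * (Q⁻¹ * Z) - (Q⁻¹ * Z) * (Q⁻¹ * B * Q)))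
          (offd ((Q⁻¹ * B * Q) * (Q⁻¹ * Z) - (Q⁻¹ * Z) * (Q⁻¹ * B * Q))) +
        2 * rinner
          ((Q⁻¹ * Z) * (Q⁻¹ * Z * (Q⁻¹ * B * Q)) - (Q⁻¹ * Z * (Q⁻¹ * B * Q)) * (Q⁻¹ * Z))
          (offd (Q⁻¹ * B * Q)) := by
  have hh := hasFDerivAt_conj B hQ
  have hE : HasFDerivAt (fun P : M => P⁻¹ * Z) (((mulL').flip Z).comp (invDeriv Q)) Q :=
    ((mulL').flip Z).hasFDerivAt.comp Q (matrixInv_hasFDerivAt hQ)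
  have hF := (HasFDerivAt.bilin mulL' hh hE).sub (HasFDerivAt.bilin mulL' hE hh)
  have hoffdF := (offdL').hasFDerivAt.comp Q hF
  have hoffdh := (offdL').hasFDerivAt.comp Q hh
  have hfinal := HasFDerivAt.bilin rinnerL' hoffdF hoffdh
  refine ⟨_, hfinal, ?_⟩
  simp only [Function.comp_apply, ContinuousLinearMap.add_apply,
    ContinuousLinearMap.comp_apply, ContinuousLinearMap.flip_apply,
    ContinuousLinearMap.sub_apply, rinnerL_apply, offdL_apply,
    mulL_apply, conjDeriv_apply, invDeriv_apply]
  have key : (Q⁻¹ * B * Q) * (-(Q⁻¹ * (Z * Q⁻¹)) * Z) +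
      ((Q⁻¹ * B * Q) * (Q⁻¹ * Z) - (Q⁻¹ * Z) * (Q⁻¹ * B * Q)) * (Q⁻¹ * Z) -
      ((Q⁻¹ * Z) * ((Q⁻¹ * B * Q) * (Q⁻¹ * Z) - (Q⁻¹ * Z) * (Q⁻¹ * B * Q)) +
        -(Q⁻¹ * (Z * Q⁻¹)) * Z * (Q⁻¹ * B * Q)) =
      ((Q⁻¹ * Z) * (Q⁻¹ * Z * (Q⁻¹ * B * Q)) - (Q⁻¹ * Z * (Q⁻¹ * B * Q)) * (Q⁻¹ * Z)) +
      ((Q⁻¹ * Z) * (Q⁻¹ * Z * (Q⁻¹ * B * Q)) - (Q⁻¹ * Z * (Q⁻¹ * B * Q)) * (Q⁻¹ * Z)) := by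
    noncomm_ring
  congr 1
  rw [key, rinner_offd_left, rinner_add_left, two_mul]

end Aux

attribute [local instance] topM

/-- the second real Fréchet differential of `f_𝒜` at an invertible `Q`,
evaluated on the diagonal `(Z,Z)`, equals
`∑ₖ ( ‖J ∘ [h_k(Q),Q⁻¹Z]‖² + 2 ⟨[Q⁻¹Z, Q⁻¹Z h_k(Q)], J ∘ h_k(Q)⟩_ℝ )`. -/
theorem iteratedFDeriv_two_costF (A : Fin K → Matrix (Fin n) (Fin n) 𝕜)
    (Q : Matrix (Fin n) (Fin n) 𝕜) (hQ : IsUnit Q) (Z : Matrix (Fin n) (Fin n) 𝕜) :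
    iteratedFDeriv ℝ 2 (costF A) Q (fun _ => Z) =
      ∑ k,
        (rinner
            (offd ((Q⁻¹ * A k * Q) * (Q⁻¹ * Z) - (Q⁻¹ * Z) * (Q⁻¹ * A k * Q)))
            (offd ((Q⁻¹ * A k * Q) * (Q⁻¹ * Z) - (Q⁻¹ * Z) * (Q⁻¹ * A k * Q))) +
          2 * rinner
            ((Q⁻¹ * Z) * (Q⁻¹ * Z * (Q⁻¹ * A k * Q)) -
              (Q⁻¹ * Z * (Q⁻¹ * A k * Q)) * (Q⁻¹ * Z))
            (offd (Q⁻¹ * A k * Q))) := by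
  have hU : ∀ᶠ P in nhds Q, IsUnit P := eventually_isUnit hQ
  have hfd : fderiv ℝ (costF A) =ᶠ[nhds Q] fun P => D1 A P :=
    hU.mono fun P hP => (hasFDerivAt_costF A hP).fderiv
  have hdiffD1 : DifferentiableAt ℝ (fun P => D1 A P) Q := differentiableAt_D1 A hQ
  have hdiffc : DifferentiableAt ℝ (fderiv ℝ (costF A)) Q :=
    hdiffD1.congr_of_eventuallyEq hfd
  rw [iteratedFDeriv_two_apply]
  have e1 : fderiv ℝ (fun P => fderiv ℝ (costF A) P Z) Q Z =
      fderiv ℝ (fderiv ℝ (costF A)) Q Z Z := by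
    rw [fderiv_clm_apply hdiffc (differentiableAt_const Z)]
    simp
  show fderiv ℝ (fderiv ℝ (costF A)) Q Z Z = _
  rw [← e1]
  have e2 : (fun P => fderiv ℝ (costF A) P Z) =ᶠ[nhds Q] fun P => D1 A P Z :=
    hfd.mono fun P hP => by simp only [hP]
  rw [e2.fderiv_eq]
  choose D hD hDval using fun k => second_piece (A k) Z hQ
  have hfun : (fun P => D1 A P Z) = fun P : Matrix (Fin n) (Fin n) 𝕜 =>
      ∑ k, rinner
        (offd ((P⁻¹ * A k * P) * (P⁻¹ * Z) - (P⁻¹ * Z) * (P⁻¹ * A k * P)))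
        (offd (P⁻¹ * A k * P)) := funext fun P => D1_apply A P Z
  have hsum : HasFDerivAt (fun P : Matrix (Fin n) (Fin n) 𝕜 =>
      ∑ k, rinner
        (offd ((P⁻¹ * A k * P) * (P⁻¹ * Z) - (P⁻¹ * Z) * (P⁻¹ * A k * P)))
        (offd (P⁻¹ * A k * P))) (∑ k, D k) Q :=
    HasFDerivAt.fun_sum fun k _ => hD k
  rw [hfun, hsum.fderiv]
  simp only [ContinuousLinearMap.coe_sum', Finset.sum_apply]
  exact Finset.sum_congr rfl fun k _ => hDval k
end
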